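/- The function R satisfies, for every q ≥ 0, the two identities λ̄·R(1,q+1) − λ·R(0,q) = M(q,0) and R(0,q+1) = ρ·R(0,q) + c_{M̃}·ρ^{q+1}, where M(q,0) = ∑_{(ỹ',q')∈𝕏, q' ≤ q} (C − f(ỹ',q'))·π_Ψ(ỹ',q'). -/

import Mathlib

open scoped BigOperators

noncomputable section

/-- The state space `𝕏 = {(0,q) : q ∈ ℕ} ∪ {(1,q) : q ≥ 1}` of the joint chain,
with the departure indicator encoded as a `Bool`. -/
abbrev XS : Type := {p : Bool × ℕ // p.1 = true → 1 ≤ p.2}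

/-- `ρ = λμ̄/(λ̄μ)`. -/
def rho (lam mu : ℝ) : ℝ := lam * (1 - mu) / ((1 - lam) * mu)

/-- The invariant distribution `π_Q` of the queue-length chain. -/
def piQ (lam mu : ℝ) (q : ℕ) : ℝ :=
  if q = 0 then ((1 - lam) * mu - lam * (1 - mu)) / mu
  else ((1 - lam) * mu - lam * (1 - mu)) / (mu * (1 - mu)) * rho lam mu ^ q

/-- The queue kernel `K` on ℕ. -/
def kerQ (lam mu : ℝ) (q q' : ℕ) : ℝ :=
  if q = 0 then (if q' = 1 then lam else if q' = 0 then 1 - lam else 0)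
  else if q' + 1 = q then (1 - lam) * mu
  else if q' = q + 1 then lam * (1 - mu)
  else if q' = q then 1 - lam * (1 - mu) - (1 - lam) * mu
  else 0

/-- The invariant distribution `π_Ψ` of the joint chain `(ỹ, q)`. -/
def piPsi (lam mu : ℝ) : Bool × ℕ → ℝ
  | (false, 0) => piQ lam mu 0
  | (false, q + 1) => (1 - mu) * piQ lam mu (q + 1)
  | (true, 0) => 0
  | (true, q + 1) => mu * piQ lam mu (q + 1)

/-- The transition kernel `P` of the joint chain: from `(ỹ,q)`, with arrival
`x̃ = q' - q + ỹ ∈ {0,1}` (probability `λ` resp. `λ̄`), the next state is `(ỹ',q')`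
with departure probability `1,0` at `q' = 0` and `μ̄, μ` at `q' ≥ 1`. -/
def kerP (lam mu : ℝ) (ψ ψ' : Bool × ℕ) : ℝ :=
  (if ((ψ'.2 : ℤ) - (ψ.2 : ℤ) + (if ψ.1 then 1 else 0)) = 1 then lam
   else if ((ψ'.2 : ℤ) - (ψ.2 : ℤ) + (if ψ.1 then 1 else 0)) = 0 then 1 - lam
   else 0) *
  (if ψ'.2 = 0 then (if ψ'.1 then 0 else 1) else (if ψ'.1 then mu else 1 - mu))

/-- The `i`-step kernel `P^i` of the joint chain. -/
def kerIter (lam mu : ℝ) : ℕ → Bool × ℕ → Bool × ℕ → ℝ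
  | 0, ψ, ψ' => if ψ = ψ' then 1 else 0
  | i + 1, ψ, ψ' => ∑' ψ'' : XS, kerIter lam mu i ψ ψ''.val * kerP lam mu ψ''.val ψ'

/-- The information-density function `f` on the joint state space. -/
def fInfo (lam mu : ℝ) : Bool × ℕ → ℝ
  | (false, 0) => Real.log (1 / (1 - lam))
  | (false, _ + 1) => Real.log ((1 - mu) / (1 - lam))
  | (true, 0) => 0
  | (true, _ + 1) => Real.log (mu / lam)

/-- The binary entropy function. -/
def Hbin (p : ℝ) : ℝ := -(p * Real.log p) - (1 - p) * Real.log (1 - p)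

/-- The capacity `C = H(λ) - (λ/μ) H(μ)` of the timing channel. -/
def Cap (lam mu : ℝ) : ℝ := Hbin lam - lam / mu * Hbin mu

/-- The constant `c_{M0}`. -/
def cM0 (lam mu : ℝ) : ℝ :=
  (1 - lam) / (1 - mu) *
    (mu * Real.log (mu / lam) + (1 - mu) * Real.log ((1 - mu) / (1 - lam)) - Cap lam mu)

/-- The constant `c_{M̃}`. -/
def cMt (lam mu : ℝ) : ℝ :=
  cM0 lam mu / mu + (Cap lam mu - Real.log (mu / lam)) * piQ lam mu 0 / (1 - mu)

/-- The partial stationary sum `M(q,0) = ∑_{ψ' ∈ 𝕏, q' ≤ q} (C - f(ψ')) π_Ψ(ψ')`. -/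
def M0 (lam mu : ℝ) (q : ℕ) : ℝ :=
  ∑' ψ : {p : Bool × ℕ // (p.1 = true → 1 ≤ p.2) ∧ p.2 ≤ q},
    (Cap lam mu - fInfo lam mu ψ.val) * piPsi lam mu ψ.val

/-- The partial stationary sum
`M(q,1) = ∑_{ψ' ∈ 𝕏 : q' < q, or q' = q and ỹ' = 1} (C - f(ψ')) π_Ψ(ψ')`. -/
def M1 (lam mu : ℝ) (q : ℕ) : ℝ :=
  ∑' ψ : {p : Bool × ℕ // (p.1 = true → 1 ≤ p.2) ∧ (p.2 < q ∨ (p.2 = q ∧ p.1 = true))},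
    (Cap lam mu - fInfo lam mu ψ.val) * piPsi lam mu ψ.val

/-- `r(ψ,i) = ∑_{ψ' ∈ 𝕏} (f(ψ') - C) π_Ψ(ψ') P^i(ψ',ψ)`. -/
def rfun (lam mu : ℝ) (i : ℕ) (ψ : Bool × ℕ) : ℝ :=
  ∑' ψ' : XS, (fInfo lam mu ψ'.val - Cap lam mu) * piPsi lam mu ψ'.val *
    kerIter lam mu i ψ'.val ψ

/-- `R(ψ) = ∑_{i=0}^∞ r(ψ,i)`. -/
def Rfun (lam mu : ℝ) (ψ : Bool × ℕ) : ℝ := ∑' i : ℕ, rfun lam mu i ψ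

/-- The stationary autocovariance
`Cov_i = ∑_{ψ,ψ' ∈ 𝕏} π_Ψ(ψ)(f(ψ)-C)(f(ψ')-C) P^i(ψ,ψ')`. -/
def covI (lam mu : ℝ) (i : ℕ) : ℝ :=
  ∑' p : XS × XS,
    piPsi lam mu p.1.val * (fInfo lam mu p.1.val - Cap lam mu) *
      (fInfo lam mu p.2.val - Cap lam mu) * kerIter lam mu i p.1.val p.2.val

/-- The Lyapunov function `V(ỹ,q) = (q - ỹ)/(μ - λ)`. -/
def Vlya (lam mu : ℝ) (ψ : Bool × ℕ) : ℝ :=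
  ((ψ.2 : ℝ) - (if ψ.1 then 1 else 0)) / (mu - lam)

/-- Stationary path probability `ℙ_n` for block length `n = m+1`:
`π_Ψ(ψ_0) ∏_{l=0}^{n-2} P(ψ_l, ψ_{l+1})`. -/
def pathP (lam mu : ℝ) (m : ℕ) (ψ : Fin (m + 1) → XS) : ℝ :=
  piPsi lam mu (ψ 0).val * ∏ l : Fin m, kerP lam mu (ψ l.castSucc).val (ψ l.succ).val

/-- The partial sum `S_n = ∑_{i=0}^{n-1} f(ψ_i)` along a path, for `n = m+1`. -/
def Spath (lam mu : ℝ) (m : ℕ) (ψ : Fin (m + 1) → XS) : ℝ :=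
  ∑ i : Fin (m + 1), fInfo lam mu (ψ i).val

/-- `Var_n = ∑_paths ℙ_n(path) (S_n - nC)^2`, for `n = m+1`. -/
def VarN (lam mu : ℝ) (m : ℕ) : ℝ :=
  ∑' ψ : Fin (m + 1) → XS,
    pathP lam mu m ψ * (Spath lam mu m ψ - ((m : ℝ) + 1) * Cap lam mu) ^ 2

/-- The explicit stationary variance `V₀` of `f`. -/
def V0 (lam mu : ℝ) : ℝ :=
  Real.log (1 / (1 - lam)) ^ 2 * piQ lam mu 0 +
    Real.log (mu / lam) ^ 2 * mu * (1 - piQ lam mu 0) +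
    Real.log ((1 - mu) / (1 - lam)) ^ 2 * (1 - mu) * (1 - piQ lam mu 0) -
    Cap lam mu ^ 2

/-- The explicit sum of autocovariances `Σ = ∑_{i=0}^∞ Cov_i`. -/
def SigSum (lam mu : ℝ) : ℝ :=
  Real.log (1 / (1 - lam)) *
      (-(cMt lam mu) * rho lam mu / (1 - rho lam mu) - cM0 lam mu * rho lam mu) +
    Real.log (mu / lam) * cM0 lam mu * rho lam mu / (1 - rho lam mu) +
    Real.log ((1 - mu) / (1 - lam)) * (rho lam mu / (1 - rho lam mu)) *
      (cMt lam mu - rho lam mu * cM0 lam mu)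

/-- The asymptotic standard deviation `σ = √(-V₀ + 2Σ)`. -/
def sigmaBE (lam mu : ℝ) : ℝ := Real.sqrt (-(V0 lam mu) + 2 * SigSum lam mu)

/-- The standard normal cumulative distribution function `Φ`. -/
def stdNormCDF (x : ℝ) : ℝ :=
  (Real.sqrt (2 * Real.pi))⁻¹ * ∫ t in Set.Iic x, Real.exp (-(t ^ 2) / 2)

/-- Single-step departure probability `w(ỹ|q)` (queues that have gone negative,
which can only happen on a zero-probability trajectory, are treated like `q = 0`). -/
def wdep (mu : ℝ) (y : Bool) (q : ℤ) : ℝ :=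
  if q ≤ 0 then (if y then 0 else 1) else (if y then mu else 1 - mu)

/-- The queue trajectory `q_i = q_{i-1} + x̃_i - ỹ_{i-1}`, with arrivals `x̃_i = x i`
for `i ≥ 1` and departures `ỹ_i = y i`. -/
def qtraj (q0 : ℕ) (x y : ℕ → Bool) : ℕ → ℤ
  | 0 => (q0 : ℤ)
  | i + 1 => qtraj q0 x y i + (if x (i + 1) then 1 else 0) - (if y i then 1 else 0)

/-- The block channel `W(y|x) = ∏_{i=0}^{n-1} w(ỹ_i|q_i)` of the queue channel. -/
def Wchan (mu : ℝ) (n : ℕ) (q0 : ℕ) (x y : ℕ → Bool) : ℝ :=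
  ∏ i ∈ Finset.range n, wdep mu (y i) (qtraj q0 x y i)

/-- The input distribution `P_X(q_0, x̃) = π_Q(q_0) ∏_{i=1}^{n-1} λ^{x̃_i} λ̄^{1-x̃_i}`. -/
def inpP (lam mu : ℝ) (n : ℕ) (q0 : ℕ) (x : ℕ → Bool) : ℝ :=
  piQ lam mu q0 * ∏ i ∈ Finset.range (n - 1), (if x (i + 1) then lam else 1 - lam)

/-- Extend an arrival word `(x̃_1, …, x̃_m) ∈ {0,1}^m` to a function on ℕ. -/
def extX (m : ℕ) (xf : Fin m → Bool) : ℕ → Bool :=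
  fun i => if h : 1 ≤ i ∧ i ≤ m then xf ⟨i - 1, by omega⟩ else false

/-- Extend an output word `(ỹ_0, …, ỹ_{n-1}) ∈ {0,1}^n` to a function on ℕ. -/
def extY (n : ℕ) (yf : Fin n → Bool) : ℕ → Bool :=
  fun i => if h : i < n then yf ⟨i, h⟩ else false

end

noncomputable section BEAux
namespace BEAux

open Finset

lemma kerP_eq_zero {lam mu : ℝ} {b c : Bool} {m n : ℕ}
    (hmn : m + 2 ≤ n ∨ n + 2 ≤ m) : kerP lam mu (b, m) (c, n) = 0 := by
  unfold kerP
  have h1 : (((n : ℤ)) - (m : ℤ) + (if (b, m).1 then 1 else 0)) ≠ 1 := by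
    rcases b <;> simp only [if_true, if_false] <;> omega
  have h2 : (((n : ℤ)) - (m : ℤ) + (if (b, m).1 then 1 else 0)) ≠ 0 := by
    rcases b <;> simp only [if_true, if_false] <;> omega
  simp only [h1, h2, if_false, zero_mul, if_neg]

lemma kerP_supp {lam mu : ℝ} {b c : Bool} {m n : ℕ}
    (h : kerP lam mu (b, m) (c, n) ≠ 0) : n ≤ m + 1 ∧ m ≤ n + 1 := by
  by_contra hc
  exact h (kerP_eq_zero (by omega))

lemma kerIter_supp {lam mu : ℝ} : ∀ (i : ℕ) (ψ ψ' : Bool × ℕ),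
    kerIter lam mu i ψ ψ' ≠ 0 → ψ'.2 ≤ ψ.2 + i ∧ ψ.2 ≤ ψ'.2 + i := by
  intro i
  induction i with
  | zero =>
    intro ψ ψ' h
    unfold kerIter at h
    split_ifs at h with he
    · subst he; omega
    · exact absurd rfl h
  | succ i ih =>
    intro ψ ψ' h
    unfold kerIter at h
    have : ∃ ψ'' : XS, kerIter lam mu i ψ ψ''.val * kerP lam mu ψ''.val ψ' ≠ 0 := by
      by_contra hc
      push_neg at hc
      exact h (by rw [tsum_congr (g := fun _ : XS => (0 : ℝ)) (fun ψ'' => hc ψ'')]; exact tsum_zero)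
    obtain ⟨ψ'', h2⟩ := this
    have hk1 := ih ψ ψ''.val (left_ne_zero_of_mul h2)
    have hk2 : kerP lam mu (ψ''.val.1, ψ''.val.2) (ψ'.1, ψ'.2) ≠ 0 := by
      simpa using right_ne_zero_of_mul h2
    have := kerP_supp hk2
    omega


lemma kerP_eq_zero' {lam mu : ℝ} {ψ ψ' : Bool × ℕ}
    (hmn : ψ.2 + 2 ≤ ψ'.2 ∨ ψ'.2 + 2 ≤ ψ.2) : kerP lam mu ψ ψ' = 0 := by
  obtain ⟨b, m⟩ := ψ; obtain ⟨c, n⟩ := ψ'; exact kerP_eq_zero hmn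

lemma summable_mul_kerIter {lam mu : ℝ} (F : Bool × ℕ → ℝ) (i : ℕ) (ψ : Bool × ℕ) :
    Summable (fun ψ' : XS => F ψ'.val * kerIter lam mu i ψ'.val ψ) := by
  apply summable_of_ne_finset_zero
    (s := ((Finset.univ : Finset Bool) ×ˢ Finset.range (ψ.2 + i + 1)).subtype _)
  intro ψ' hψ'
  have hge : ψ.2 + i + 1 ≤ ψ'.val.2 := by
    by_contra hc
    apply hψ'
    simp only [Finset.mem_subtype, Finset.mem_product, Finset.mem_range]
    exact ⟨Finset.mem_univ _, by omega⟩
  have hz : kerIter lam mu i ψ'.val ψ = 0 := by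
    by_contra hk; have := kerIter_supp i ψ'.val ψ hk; omega
  rw [hz, mul_zero]

/-- The two elements of `XS` at queue level. -/
def e0 (q : ℕ) : XS := ⟨(false, q), by simp⟩
def e1 (q : ℕ) : XS := ⟨(true, q + 1), by simp⟩

lemma rfun_zero {lam mu : ℝ} (ψ : XS) :
    rfun lam mu 0 ψ.val = (fInfo lam mu ψ.val - Cap lam mu) * piPsi lam mu ψ.val := by
  unfold rfun
  rw [tsum_eq_single ψ]
  · unfold kerIter; simp
  · intro ψ' h
    unfold kerIter
    rw [if_neg (fun he => h (Subtype.ext he)), mul_zero]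

lemma rfun_succ {lam mu : ℝ} (i : ℕ) (ψ : Bool × ℕ) (NB : Finset XS)
    (hNB : ∀ ψ'' : XS, ψ'' ∉ NB → kerP lam mu ψ''.val ψ = 0) :
    rfun lam mu (i + 1) ψ = ∑ ψ'' ∈ NB, rfun lam mu i ψ''.val * kerP lam mu ψ''.val ψ := by
  have hker : ∀ ψ' : Bool × ℕ, kerIter lam mu (i + 1) ψ' ψ =
      ∑ ψ'' ∈ NB, kerIter lam mu i ψ' ψ''.val * kerP lam mu ψ''.val ψ := by
    intro ψ'
    show (∑' ψ'' : XS, kerIter lam mu i ψ' ψ''.val * kerP lam mu ψ''.val ψ) = _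
    exact tsum_eq_sum (fun ψ'' h => by rw [hNB ψ'' h, mul_zero])
  show (∑' ψ' : XS, (fInfo lam mu ψ'.val - Cap lam mu) * piPsi lam mu ψ'.val *
      kerIter lam mu (i+1) ψ'.val ψ) = _
  calc (∑' ψ' : XS, (fInfo lam mu ψ'.val - Cap lam mu) * piPsi lam mu ψ'.val *
      kerIter lam mu (i+1) ψ'.val ψ)
      = ∑' ψ' : XS, ∑ ψ'' ∈ NB, ((fInfo lam mu ψ'.val - Cap lam mu) * piPsi lam mu ψ'.val *
          kerIter lam mu i ψ'.val ψ''.val) * kerP lam mu ψ''.val ψ := by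
        refine tsum_congr fun ψ' => ?_
        rw [hker ψ'.val, Finset.mul_sum]
        exact Finset.sum_congr rfl fun ψ'' _ => by ring
    _ = ∑ ψ'' ∈ NB, ∑' ψ' : XS, ((fInfo lam mu ψ'.val - Cap lam mu) * piPsi lam mu ψ'.val *
          kerIter lam mu i ψ'.val ψ''.val) * kerP lam mu ψ''.val ψ := by
        refine Summable.tsum_finsetSum fun ψ'' _ => ?_
        exact (summable_mul_kerIter (fun p => (fInfo lam mu p - Cap lam mu) * piPsi lam mu p)
          i ψ''.val).mul_right _
    _ = ∑ ψ'' ∈ NB, rfun lam mu i ψ''.val * kerP lam mu ψ''.val ψ := by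
        refine Finset.sum_congr rfl fun ψ'' _ => ?_
        rw [tsum_mul_right]; rfl

variable {lam mu : ℝ}

lemma kerP_k1 (q : ℕ) (c : Bool) :
    kerP lam mu (false, q) (c, q + 1) = lam * (if c then mu else 1 - mu) := by
  rcases c <;> (unfold kerP; push_cast; norm_num)

lemma kerP_k2 (q : ℕ) (c : Bool) :
    kerP lam mu (false, q + 1) (c, q + 1) = (1 - lam) * (if c then mu else 1 - mu) := by
  rcases c <;> (unfold kerP; push_cast; norm_num)

lemma kerP_k3 (q : ℕ) (c : Bool) :
    kerP lam mu (true, q + 1) (c, q + 1) = lam * (if c then mu else 1 - mu) := by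
  rcases c <;> (unfold kerP; push_cast; norm_num)

lemma kerP_k4 (q : ℕ) (c : Bool) :
    kerP lam mu (true, q + 2) (c, q + 1) = (1 - lam) * (if c then mu else 1 - mu) := by
  rcases c <;> (unfold kerP; push_cast; norm_num)

lemma kerP_k5 : kerP lam mu (false, 0) (false, 0) = 1 - lam := by
  unfold kerP; norm_num

lemma kerP_k6 : kerP lam mu (true, 1) (false, 0) = 1 - lam := by
  unfold kerP; norm_num

lemma kerP_z1 {m n : ℕ} {c : Bool} (h : n < m) : kerP lam mu (false, m) (c, n) = 0 := by
  unfold kerP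
  rw [if_neg (by simp only [Bool.false_eq_true, if_false, add_zero]; omega),
    if_neg (by simp only [Bool.false_eq_true, if_false, add_zero]; omega), zero_mul]

lemma kerP_z2 {m n : ℕ} {c : Bool} (h : m < n) : kerP lam mu (true, m) (c, n) = 0 := by
  unfold kerP
  rw [if_neg (by simp only [if_true]; omega), if_neg (by simp only [if_true]; omega), zero_mul]

/-- The cut/projected signed measure `α_i(u)`. -/
def aA (lam mu : ℝ) (i u : ℕ) : ℝ := rfun lam mu i (false, u) + rfun lam mu i (true, u + 1)

lemma rfun_succ_pos (i q : ℕ) (c : Bool) :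
    rfun lam mu (i + 1) (c, q + 1) =
      (if c then mu else 1 - mu) * (lam * aA lam mu i q + (1 - lam) * aA lam mu i (q + 1)) := by
  have hNB : ∀ ψ'' : XS, ψ'' ∉ ({e0 q, e0 (q+1), e1 q, e1 (q+1)} : Finset XS) →
      kerP lam mu ψ''.val (c, q + 1) = 0 := by
    rintro ⟨⟨b, m⟩, hb⟩ h
    by_contra hk
    have hs := kerP_supp hk
    rcases b
    · have : m = q ∨ m = q + 1 ∨ m = q + 2 := by omega
      rcases this with rfl | rfl | rfl
      · exact h (by simp [e0, e1])
      · exact h (by simp [e0, e1])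
      · exact hk (kerP_z1 (by omega))
    · have h1 : 1 ≤ m := hb rfl
      have : m = q ∨ m = q + 1 ∨ m = q + 2 := by omega
      rcases this with rfl | rfl | rfl
      · exact hk (kerP_z2 (by omega))
      · exact h (by simp [e0, e1])
      · exact h (by simp [e0, e1])
  rw [rfun_succ i (c, q+1) _ hNB]
  have d1 : e0 q ∉ ({e0 (q+1), e1 q, e1 (q+1)} : Finset XS) := by simp [e0, e1]
  have d2 : e0 (q+1) ∉ ({e1 q, e1 (q+1)} : Finset XS) := by simp [e0, e1]
  have d3 : e1 q ∉ ({e1 (q+1)} : Finset XS) := by simp [e1]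
  rw [Finset.sum_insert d1, Finset.sum_insert d2, Finset.sum_insert d3, Finset.sum_singleton]
  show rfun lam mu i (false, q) * kerP lam mu (false, q) (c, q+1) +
      (rfun lam mu i (false, q+1) * kerP lam mu (false, q+1) (c, q+1) +
      (rfun lam mu i (true, q+1) * kerP lam mu (true, q+1) (c, q+1) +
       rfun lam mu i (true, q+2) * kerP lam mu (true, q+2) (c, q+1))) = _
  rw [kerP_k1, kerP_k2, kerP_k3, kerP_k4]
  unfold aA
  ring

lemma rfun_succ_zero (i : ℕ) :
    rfun lam mu (i + 1) (false, 0) = (1 - lam) * aA lam mu i 0 := by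
  have hNB : ∀ ψ'' : XS, ψ'' ∉ ({e0 0, e1 0} : Finset XS) →
      kerP lam mu ψ''.val (false, 0) = 0 := by
    rintro ⟨⟨b, m⟩, hb⟩ h
    by_contra hk
    have hs := kerP_supp hk
    rcases b
    · have : m = 0 ∨ m = 1 := by omega
      rcases this with rfl | rfl
      · exact h (by simp [e0, e1])
      · exact hk (kerP_z1 (by omega))
    · have h1 : 1 ≤ m := hb rfl
      have : m = 1 := by omega
      rcases this with rfl
      exact h (by simp [e0, e1])
  rw [rfun_succ i (false, 0) _ hNB]
  have d1 : e0 0 ∉ ({e1 0} : Finset XS) := by simp [e0, e1]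
  rw [Finset.sum_insert d1, Finset.sum_singleton]
  show rfun lam mu i (false, 0) * kerP lam mu (false, 0) (false, 0) +
      rfun lam mu i (true, 1) * kerP lam mu (true, 1) (false, 0) = _
  rw [kerP_k5, kerP_k6]
  unfold aA
  ring

/-- Geometric coefficient of `α_0`. -/
def eC (lam mu : ℝ) : ℝ :=
  ((Real.log ((1 - mu) / (1 - lam)) - Cap lam mu) * (1 - mu) +
    (Real.log (mu / lam) - Cap lam mu) * mu * rho lam mu) *
    (((1 - lam) * mu - lam * (1 - mu)) / (mu * (1 - mu)))

/-- Atom of `α_0` at `0`. -/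
def dC (lam mu : ℝ) : ℝ :=
  (Real.log (1 / (1 - lam)) - Cap lam mu) * piQ lam mu 0 +
    (Real.log (mu / lam) - Cap lam mu) * mu * piQ lam mu 1 - eC lam mu

lemma aA0_zero : aA lam mu 0 0 = dC lam mu + eC lam mu := by
  show rfun lam mu 0 (e0 0).val + rfun lam mu 0 (e1 0).val = _
  rw [rfun_zero (lam := lam) (mu := mu) (e0 0), rfun_zero (lam := lam) (mu := mu) (e1 0)]
  show (fInfo lam mu (false, 0) - Cap lam mu) * piPsi lam mu (false, 0) +
      (fInfo lam mu (true, 1) - Cap lam mu) * piPsi lam mu (true, 1) = _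
  unfold dC fInfo piPsi
  ring

lemma aA0_succ (u : ℕ) : aA lam mu 0 (u + 1) = eC lam mu * rho lam mu ^ (u + 1) := by
  show rfun lam mu 0 (e0 (u+1)).val + rfun lam mu 0 (e1 (u+1)).val = _
  rw [rfun_zero (lam := lam) (mu := mu) (e0 (u+1)), rfun_zero (lam := lam) (mu := mu) (e1 (u+1))]
  show (fInfo lam mu (false, u + 1) - Cap lam mu) * piPsi lam mu (false, u + 1) +
      (fInfo lam mu (true, u + 2) - Cap lam mu) * piPsi lam mu (true, u + 2) = _
  unfold eC fInfo piPsi piQ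
  simp only [Nat.succ_ne_zero, if_false]
  rw [pow_succ (rho lam mu) (u + 1)]
  ring

set_option linter.unusedSectionVars false

section withH
variable (h0 : 0 < lam) (h1 : lam < mu) (h2 : mu < 1)
include h0 h1 h2

lemma hlam1 : lam < 1 := h1.trans h2
lemma hlb : (0:ℝ) < 1 - lam := by linarith
lemma hmb : (0:ℝ) < 1 - mu := by linarith
lemma hmu : (0:ℝ) < mu := h0.trans h1
lemma hrho0 : 0 < rho lam mu := by
  unfold rho
  have := hlb h0 h1 h2; have := hmb h0 h1 h2; have := hmu h0 h1 h2
  positivity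
lemma hrho1 : rho lam mu < 1 := by
  unfold rho
  rw [div_lt_one (by nlinarith [hlb h0 h1 h2, hmu h0 h1 h2])]
  nlinarith

lemma mass_zero : dC lam mu * (1 - rho lam mu) + eC lam mu = 0 := by
  have hl0 := h0.ne'
  have hl1 := (hlb h0 h1 h2).ne'
  have hm0 := (hmu h0 h1 h2).ne'
  have hm1 := (hmb h0 h1 h2).ne'
  unfold dC eC Cap Hbin piQ rho
  rw [Real.log_div hm1 hl1, Real.log_div hm0 hl0, one_div, Real.log_inv]
  simp only [one_ne_zero, if_false, if_true, pow_one]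
  field_simp
  ring
end withH

/-- Partial sums of `α_i`. -/
def DD (lam mu : ℝ) (i u : ℕ) : ℝ := ∑ v ∈ Finset.range u, aA lam mu i v

lemma DD_zero (i : ℕ) : DD lam mu i 0 = 0 := Finset.sum_range_zero _

lemma DD_step (i u : ℕ) : DD lam mu i (u + 1) = DD lam mu i u + aA lam mu i u :=
  Finset.sum_range_succ _ _

lemma aA_succ_zero (i : ℕ) : aA lam mu (i + 1) 0 =
    (1 - lam * (1 - mu)) * aA lam mu i 0 + (1 - lam) * mu * aA lam mu i 1 := by
  show rfun lam mu (i+1) (false, 0) + rfun lam mu (i+1) (true, 0 + 1) = _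
  rw [rfun_succ_zero, rfun_succ_pos i 0 true]
  simp only [if_true]
  unfold aA
  ring

lemma aA_succ_succ (i u : ℕ) : aA lam mu (i + 1) (u + 1) =
    lam * (1 - mu) * aA lam mu i u +
      (1 - lam * (1 - mu) - (1 - lam) * mu) * aA lam mu i (u + 1) +
      (1 - lam) * mu * aA lam mu i (u + 2) := by
  show rfun lam mu (i+1) (false, u + 1) + rfun lam mu (i+1) (true, (u + 1) + 1) = _
  rw [rfun_succ_pos i u false, rfun_succ_pos i (u + 1) true]
  simp only [if_true, Bool.false_eq_true, if_false]
  ring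

lemma DD_succ (i : ℕ) : ∀ u : ℕ, DD lam mu (i + 1) (u + 1) =
    lam * (1 - mu) * DD lam mu i u +
      (1 - lam * (1 - mu) - (1 - lam) * mu) * DD lam mu i (u + 1) +
      (1 - lam) * mu * DD lam mu i (u + 2) := by
  intro u
  induction u with
  | zero =>
    have t1 := DD_step (lam := lam) (mu := mu) (i+1) 0
    have t0 := DD_zero (lam := lam) (mu := mu) (i+1)
    have a0 := aA_succ_zero (lam := lam) (mu := mu) i
    have z := DD_zero (lam := lam) (mu := mu) i
    have s1 := DD_step (lam := lam) (mu := mu) i 0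
    have s0 := DD_step (lam := lam) (mu := mu) i 1
    linear_combination t1 + t0 + a0 - z - (1 - lam * (1 - mu)) * s1 - ((1 - lam) * mu) * s0
  | succ u ih =>
    have g1 := DD_step (lam := lam) (mu := mu) (i+1) (u+1)
    have g2 := aA_succ_succ (lam := lam) (mu := mu) i u
    have s1 := DD_step (lam := lam) (mu := mu) i u
    have s0 := DD_step (lam := lam) (mu := mu) i (u+1)
    have s2 := DD_step (lam := lam) (mu := mu) i (u+2)
    linear_combination g1 + ih + g2 - (lam * (1 - mu)) * s1 -
      (1 - lam * (1 - mu) - (1 - lam) * mu) * s0 - ((1 - lam) * mu) * s2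

section withH2
variable (h0 : 0 < lam) (h1 : lam < mu) (h2 : mu < 1)
include h0 h1 h2

lemma DD0_closed : ∀ u : ℕ,
    DD lam mu 0 (u + 1) * (1 - rho lam mu) = -(eC lam mu) * rho lam mu ^ (u + 1) := by
  intro u
  induction u with
  | zero =>
    have b1 : DD lam mu 0 1 = dC lam mu + eC lam mu := by
      rw [DD_step (lam := lam) (mu := mu) 0 0, DD_zero, aA0_zero, zero_add]
    have mass := mass_zero h0 h1 h2
    have : rho lam mu ^ (0 + 1) = rho lam mu := pow_one _
    rw [this]
    linear_combination (1 - rho lam mu) * b1 + mass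
  | succ u ih =>
    have hs := DD_step (lam := lam) (mu := mu) 0 (u + 1)
    have ha := aA0_succ (lam := lam) (mu := mu) u
    have hp : rho lam mu ^ (u + 1 + 1) = rho lam mu ^ (u + 1) * rho lam mu := pow_succ _ _
    linear_combination (1 - rho lam mu) * (hs + ha) + ih + eC lam mu * hp

end withH2

/-- Supersolution base. -/
def sP (lam mu : ℝ) : ℝ := (1 + rho lam mu) / 2
/-- Contraction factor. -/
def thP (lam mu : ℝ) : ℝ :=
  lam * (1 - mu) / sP lam mu + (1 - lam * (1 - mu) - (1 - lam) * mu) + (1 - lam) * mu * sP lam mu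
/-- Bound constant. -/
def Bc (lam mu : ℝ) : ℝ := |eC lam mu| / (1 - rho lam mu)

section withH3
variable (h0 : 0 < lam) (h1 : lam < mu) (h2 : mu < 1)
include h0 h1 h2

lemma hs0 : 0 < sP lam mu := by
  have := hrho0 h0 h1 h2; unfold sP; linarith
lemma hs1 : sP lam mu < 1 := by
  have := hrho1 h0 h1 h2; unfold sP; linarith
lemma hrs : rho lam mu < sP lam mu := by
  have := hrho1 h0 h1 h2; unfold sP; linarith
lemma hpr : 0 < 1 - lam * (1 - mu) - (1 - lam) * mu := by nlinarith
lemma hth0 : 0 < thP lam mu := by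
  have hs := hs0 h0 h1 h2
  have hpr := hpr h0 h1 h2
  have h3 : 0 < lam * (1 - mu) / sP lam mu := div_pos (by nlinarith) hs
  have h4 : 0 ≤ (1 - lam) * mu * sP lam mu := mul_nonneg (by nlinarith) hs.le
  unfold thP; linarith
lemma hth1 : thP lam mu < 1 := by
  have hs := hs0 h0 h1 h2
  have hs1 := hs1 h0 h1 h2
  have hrs := hrs h0 h1 h2
  have hr : 0 < (1 - lam) * mu := by nlinarith
  have hrρ : rho lam mu * ((1 - lam) * mu) = lam * (1 - mu) := by
    unfold rho
    exact div_mul_cancel₀ _ (mul_ne_zero (hlb h0 h1 h2).ne' (hmu h0 h1 h2).ne')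
  have expand : thP lam mu * sP lam mu = lam * (1 - mu) +
      (1 - lam * (1 - mu) - (1 - lam) * mu) * sP lam mu +
      (1 - lam) * mu * sP lam mu ^ 2 := by
    unfold thP; field_simp
  have hint : 0 < (1 - lam) * mu * ((1 - sP lam mu) * (sP lam mu - rho lam mu)) :=
    mul_pos hr (mul_pos (by linarith) (by linarith))
  have h5 : thP lam mu * sP lam mu < sP lam mu := by nlinarith [expand, hint, hrρ]
  exact lt_of_mul_lt_mul_right (by rw [one_mul]; exact h5) hs.le

lemma theta_mul (u : ℕ) :
    lam * (1 - mu) * sP lam mu ^ u +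
      (1 - lam * (1 - mu) - (1 - lam) * mu) * sP lam mu ^ (u + 1) +
      (1 - lam) * mu * sP lam mu ^ (u + 2) = thP lam mu * sP lam mu ^ (u + 1) := by
  have hs := (hs0 h0 h1 h2).ne'
  unfold thP
  field_simp
  ring

lemma Bc_nonneg : 0 ≤ Bc lam mu := by
  have := hrho1 h0 h1 h2
  exact div_nonneg (abs_nonneg _) (by linarith)

lemma DD_bound : ∀ i u, |DD lam mu i u| ≤ Bc lam mu * thP lam mu ^ i * sP lam mu ^ u := by
  have hρ0 := hrho0 h0 h1 h2
  have hρ1 := hrho1 h0 h1 h2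
  have hsp0 := hs0 h0 h1 h2
  have hsp1 := hs1 h0 h1 h2
  have hrs := hrs h0 h1 h2
  have hB := Bc_nonneg h0 h1 h2
  have hth0 := hth0 h0 h1 h2
  intro i
  induction i with
  | zero =>
    intro u
    match u with
    | 0 =>
      rw [DD_zero]
      simp only [pow_zero, mul_one, abs_zero]
      exact hB
    | u + 1 =>
      have hcl := DD0_closed h0 h1 h2 u
      have h1ρ : (0:ℝ) < 1 - rho lam mu := by linarith
      have hD : DD lam mu 0 (u + 1) = -(eC lam mu) * rho lam mu ^ (u + 1) / (1 - rho lam mu) :=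
        eq_div_of_mul_eq h1ρ.ne' hcl
      have hpow : rho lam mu ^ (u + 1) ≤ sP lam mu ^ (u + 1) :=
        pow_le_pow_left₀ (le_of_lt hρ0) (le_of_lt hrs) (u + 1)
      calc |DD lam mu 0 (u + 1)| = |eC lam mu| * rho lam mu ^ (u + 1) / (1 - rho lam mu) := by
            rw [hD, abs_div, abs_mul, abs_neg, abs_pow, abs_of_pos hρ0, abs_of_pos h1ρ]
        _ ≤ |eC lam mu| * sP lam mu ^ (u + 1) / (1 - rho lam mu) := by
            have hnum := mul_le_mul_of_nonneg_left hpow (abs_nonneg (eC lam mu))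
            gcongr
        _ = Bc lam mu * thP lam mu ^ 0 * sP lam mu ^ (u + 1) := by
            unfold Bc; rw [pow_zero]; ring
  | succ i ih =>
    intro u
    match u with
    | 0 =>
      rw [DD_zero]
      simp only [pow_zero, mul_one, abs_zero]
      positivity
    | u + 1 =>
      have hp : (0:ℝ) ≤ lam * (1 - mu) := by nlinarith
      have hc : (0:ℝ) ≤ 1 - lam * (1 - mu) - (1 - lam) * mu := le_of_lt (hpr h0 h1 h2)
      have hr : (0:ℝ) ≤ (1 - lam) * mu := by nlinarith
      have e1 : |lam * (1 - mu) * DD lam mu i u| ≤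
          lam * (1 - mu) * (Bc lam mu * thP lam mu ^ i * sP lam mu ^ u) := by
        rw [abs_mul, abs_of_nonneg hp]
        exact mul_le_mul_of_nonneg_left (ih u) hp
      have e2 : |(1 - lam * (1 - mu) - (1 - lam) * mu) * DD lam mu i (u + 1)| ≤
          (1 - lam * (1 - mu) - (1 - lam) * mu) *
            (Bc lam mu * thP lam mu ^ i * sP lam mu ^ (u + 1)) := by
        rw [abs_mul, abs_of_nonneg hc]
        exact mul_le_mul_of_nonneg_left (ih (u + 1)) hc
      have e3 : |(1 - lam) * mu * DD lam mu i (u + 2)| ≤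
          (1 - lam) * mu * (Bc lam mu * thP lam mu ^ i * sP lam mu ^ (u + 2)) := by
        rw [abs_mul, abs_of_nonneg hr]
        exact mul_le_mul_of_nonneg_left (ih (u + 2)) hr
      rw [DD_succ]
      calc |lam * (1 - mu) * DD lam mu i u +
          (1 - lam * (1 - mu) - (1 - lam) * mu) * DD lam mu i (u + 1) +
          (1 - lam) * mu * DD lam mu i (u + 2)|
          ≤ |lam * (1 - mu) * DD lam mu i u +
              (1 - lam * (1 - mu) - (1 - lam) * mu) * DD lam mu i (u + 1)| +
            |(1 - lam) * mu * DD lam mu i (u + 2)| := abs_add_le _ _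
        _ ≤ |lam * (1 - mu) * DD lam mu i u| +
            |(1 - lam * (1 - mu) - (1 - lam) * mu) * DD lam mu i (u + 1)| +
            |(1 - lam) * mu * DD lam mu i (u + 2)| := by
              have := abs_add_le (lam * (1 - mu) * DD lam mu i u)
                ((1 - lam * (1 - mu) - (1 - lam) * mu) * DD lam mu i (u + 1))
              linarith
        _ ≤ lam * (1 - mu) * (Bc lam mu * thP lam mu ^ i * sP lam mu ^ u) +
            (1 - lam * (1 - mu) - (1 - lam) * mu) *
              (Bc lam mu * thP lam mu ^ i * sP lam mu ^ (u + 1)) +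
            (1 - lam) * mu * (Bc lam mu * thP lam mu ^ i * sP lam mu ^ (u + 2)) := by
              linarith
        _ = Bc lam mu * thP lam mu ^ (i + 1) * sP lam mu ^ (u + 1) := by
              have hmm := theta_mul h0 h1 h2 (lam := lam) (mu := mu) u
              have hpow : thP lam mu ^ (i + 1) = thP lam mu ^ i * thP lam mu := pow_succ _ _
              linear_combination (Bc lam mu * thP lam mu ^ i) * hmm +
                (Bc lam mu * sP lam mu ^ (u + 1)) * hpow

lemma aA_bound (i u : ℕ) : |aA lam mu i u| ≤ 2 * Bc lam mu * thP lam mu ^ i := by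
  have h := DD_bound h0 h1 h2 i
  have hsp0 := hs0 h0 h1 h2
  have hsp1 := hs1 h0 h1 h2
  have hB := Bc_nonneg h0 h1 h2
  have hth0 := hth0 h0 h1 h2
  have hA : aA lam mu i u = DD lam mu i (u + 1) - DD lam mu i u := by
    rw [DD_step]; ring
  have h1' := h u
  have h2' := h (u + 1)
  have hp1 : sP lam mu ^ u ≤ 1 := pow_le_one₀ (le_of_lt hsp0) (le_of_lt hsp1)
  have hp2 : sP lam mu ^ (u + 1) ≤ 1 := pow_le_one₀ (le_of_lt hsp0) (le_of_lt hsp1)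
  have hBth : 0 ≤ Bc lam mu * thP lam mu ^ i := by positivity
  rw [hA]
  calc |DD lam mu i (u + 1) - DD lam mu i u| ≤ |DD lam mu i (u + 1)| + |DD lam mu i u| :=
        abs_sub _ _
    _ ≤ 2 * Bc lam mu * thP lam mu ^ i := by nlinarith

lemma rfun_bound (i : ℕ) (ψ : Bool × ℕ) (hψ : ψ.1 = true → 1 ≤ ψ.2) :
    |rfun lam mu (i + 1) ψ| ≤ 2 * Bc lam mu * thP lam mu ^ i := by
  have hl0 := h0
  have hl1 : lam < 1 := by linarith
  have hm0 : (0:ℝ) < mu := by linarith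
  have hm1 := h2
  have hB := Bc_nonneg h0 h1 h2
  have hth0 := hth0 h0 h1 h2
  have hBth : 0 ≤ 2 * Bc lam mu * thP lam mu ^ i := by positivity
  have key : ∀ q : ℕ, |lam * aA lam mu i q + (1 - lam) * aA lam mu i (q + 1)| ≤
      2 * Bc lam mu * thP lam mu ^ i := by
    intro q
    have b1 := aA_bound h0 h1 h2 i q
    have b2 := aA_bound h0 h1 h2 i (q + 1)
    calc |lam * aA lam mu i q + (1 - lam) * aA lam mu i (q + 1)|
        ≤ |lam * aA lam mu i q| + |(1 - lam) * aA lam mu i (q + 1)| := abs_add_le _ _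
      _ = lam * |aA lam mu i q| + (1 - lam) * |aA lam mu i (q + 1)| := by
          rw [abs_mul, abs_mul, abs_of_nonneg (le_of_lt hl0),
            abs_of_nonneg (by linarith : (0:ℝ) ≤ 1 - lam)]
      _ ≤ lam * (2 * Bc lam mu * thP lam mu ^ i) +
          (1 - lam) * (2 * Bc lam mu * thP lam mu ^ i) := by
          have := mul_le_mul_of_nonneg_left b1 (le_of_lt hl0)
          have := mul_le_mul_of_nonneg_left b2 (by linarith : (0:ℝ) ≤ 1 - lam)
          linarith
      _ = 2 * Bc lam mu * thP lam mu ^ i := by ring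
  obtain ⟨b, q⟩ := ψ
  rcases b with _ | _
  · match q with
    | 0 =>
      rw [rfun_succ_zero, abs_mul, abs_of_nonneg (by linarith : (0:ℝ) ≤ 1 - lam)]
      have := aA_bound h0 h1 h2 i 0
      nlinarith [abs_nonneg (aA lam mu i 0)]
    | q + 1 =>
      rw [rfun_succ_pos i q false]
      simp only [Bool.false_eq_true, if_false]
      rw [abs_mul, abs_of_nonneg (by linarith : (0:ℝ) ≤ 1 - mu)]
      have hk := key q
      have hle := mul_le_of_le_one_left
        (abs_nonneg (lam * aA lam mu i q + (1 - lam) * aA lam mu i (q + 1)))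
        (by linarith : (1:ℝ) - mu ≤ 1)
      linarith
  · match q, hψ with
    | q + 1, _ =>
      rw [rfun_succ_pos i q true]
      simp only [if_true]
      rw [abs_mul, abs_of_nonneg (le_of_lt hm0)]
      have hk := key q
      have hle := mul_le_of_le_one_left
        (abs_nonneg (lam * aA lam mu i q + (1 - lam) * aA lam mu i (q + 1)))
        (by linarith : mu ≤ 1)
      linarith

lemma summable_rfun (ψ : Bool × ℕ) (hψ : ψ.1 = true → 1 ≤ ψ.2) :
    Summable (fun i => rfun lam mu i ψ) := by
  apply (summable_nat_add_iff 1).mp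
  apply Summable.of_norm_bounded (g := fun i => 2 * Bc lam mu * thP lam mu ^ i)
  · exact (summable_geometric_of_lt_one (le_of_lt (hth0 h0 h1 h2)) (hth1 h0 h1 h2)).mul_left _
  · intro i
    rw [Real.norm_eq_abs]
    exact rfun_bound h0 h1 h2 i ψ hψ

end withH3

lemma M0_eq_sum (lam mu : ℝ) (q : ℕ) : M0 lam mu q =
    ∑ ψ ∈ (({false, true} : Finset Bool) ×ˢ Finset.range (q + 1)),
      (Cap lam mu - fInfo lam mu ψ) * piPsi lam mu ψ := by
  have h0 : M0 lam mu q = ∑' x : ↑{p : Bool × ℕ | (p.1 = true → 1 ≤ p.2) ∧ p.2 ≤ q},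
      (Cap lam mu - fInfo lam mu x.val) * piPsi lam mu x.val := rfl
  rw [h0, tsum_subtype {p : Bool × ℕ | (p.1 = true → 1 ≤ p.2) ∧ p.2 ≤ q}
    (fun ψ => (Cap lam mu - fInfo lam mu ψ) * piPsi lam mu ψ)]
  rw [tsum_eq_sum (s := (({false, true} : Finset Bool) ×ˢ Finset.range (q + 1)))]
  · apply Finset.sum_congr rfl
    intro ψ hψ
    by_cases hS : (ψ.1 = true → 1 ≤ ψ.2) ∧ ψ.2 ≤ q
    · exact Set.indicator_of_mem (show ψ ∈ {p : Bool × ℕ | (p.1 = true → 1 ≤ p.2) ∧ p.2 ≤ q} from hS) _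
    · rw [Set.indicator_of_notMem (show ψ ∉ {p : Bool × ℕ | (p.1 = true → 1 ≤ p.2) ∧ p.2 ≤ q} from hS)]
      obtain ⟨b, n⟩ := ψ
      simp only [Finset.mem_product, Finset.mem_range] at hψ
      have hn : n ≤ q := by omega
      have : b = true ∧ n = 0 := by
        by_contra hbn
        apply hS
        constructor
        · intro hb
          rcases Nat.eq_zero_or_pos n with h | h
          · exact absurd ⟨hb, h⟩ hbn
          · exact h
        · exact hn
      obtain ⟨rfl, rfl⟩ := this
      simp [piPsi]
  · intro ψ hψ
    apply Set.indicator_of_notMem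
    intro hS
    obtain ⟨hS1, hS2⟩ := hS
    apply hψ
    rw [Finset.mem_product, Finset.mem_range]
    exact ⟨by rcases ψ.1 with _ | _ <;> simp, by omega⟩

lemma M0_split (lam mu : ℝ) (q : ℕ) : M0 lam mu q =
    (∑ n ∈ Finset.range (q + 1), (Cap lam mu - fInfo lam mu (false, n)) * piPsi lam mu (false, n)) +
    (∑ n ∈ Finset.range (q + 1), (Cap lam mu - fInfo lam mu (true, n)) * piPsi lam mu (true, n)) := by
  rw [M0_eq_sum, Finset.sum_product, Finset.sum_pair (by simp : (false : Bool) ≠ true)]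

lemma M0_zero' (lam mu : ℝ) : M0 lam mu 0 =
    (Cap lam mu - fInfo lam mu (false, 0)) * piPsi lam mu (false, 0) := by
  rw [M0_split]
  simp [piPsi, Finset.sum_range_one]

lemma M0_succ' (lam mu : ℝ) (q : ℕ) : M0 lam mu (q + 1) = M0 lam mu q +
    (Cap lam mu - fInfo lam mu (false, q + 1)) * piPsi lam mu (false, q + 1) +
    (Cap lam mu - fInfo lam mu (true, q + 1)) * piPsi lam mu (true, q + 1) := by
  rw [M0_split, M0_split, Finset.sum_range_succ, Finset.sum_range_succ
    (fun n => (Cap lam mu - fInfo lam mu (true, n)) * piPsi lam mu (true, n))]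
  ring

/-- Coefficient of the geometric part of `M0`. -/
def mw (lam mu : ℝ) : ℝ :=
  ((Cap lam mu - Real.log ((1 - mu) / (1 - lam))) * (1 - mu) +
    (Cap lam mu - Real.log (mu / lam)) * mu) *
    (((1 - lam) * mu - lam * (1 - mu)) / (mu * (1 - mu)))

lemma M0_closed (lam mu : ℝ) : ∀ q : ℕ, M0 lam mu q * (1 - rho lam mu) =
    (Cap lam mu - Real.log (1 / (1 - lam))) * piQ lam mu 0 * (1 - rho lam mu) +
      mw lam mu * rho lam mu * (1 - rho lam mu ^ q) := by
  intro q
  induction q with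
  | zero =>
    have h := M0_zero' lam mu
    simp only [fInfo, piPsi] at h
    rw [h, pow_zero]
    ring
  | succ q ih =>
    have hpiq : piQ lam mu (q + 1) =
        ((1 - lam) * mu - lam * (1 - mu)) / (mu * (1 - mu)) * rho lam mu ^ (q + 1) := by
      unfold piQ
      simp
    have hF : (Cap lam mu - Real.log ((1 - mu) / (1 - lam))) * ((1 - mu) * piQ lam mu (q + 1)) +
        (Cap lam mu - Real.log (mu / lam)) * (mu * piQ lam mu (q + 1)) =
        mw lam mu * rho lam mu ^ (q + 1) := by
      rw [hpiq]; unfold mw; ring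
    rw [M0_succ']
    simp only [fInfo, piPsi]
    linear_combination ih + (1 - rho lam mu) * hF

section withH4
variable (h0 : 0 < lam) (h1 : lam < mu) (h2 : mu < 1)
include h0 h1 h2

lemma summable_aA' (q : ℕ) : Summable (fun i => aA lam mu i q) := by
  unfold aA
  exact (summable_rfun h0 h1 h2 (false, q) (by simp)).add
    (summable_rfun h0 h1 h2 (true, q + 1) (fun _ => by omega))

lemma tsum_aA (q : ℕ) :
    ∑' i, aA lam mu i q = Rfun lam mu (false, q) + Rfun lam mu (true, q + 1) := by
  unfold aA Rfun
  exact Summable.tsum_add (summable_rfun h0 h1 h2 (false, q) (by simp))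
    (summable_rfun h0 h1 h2 (true, q + 1) (fun _ => by omega))

lemma bal0 : Rfun lam mu (false, 0) =
    (fInfo lam mu (false, 0) - Cap lam mu) * piPsi lam mu (false, 0) +
      (1 - lam) * (Rfun lam mu (false, 0) + Rfun lam mu (true, 1)) := by
  have hsum := summable_rfun h0 h1 h2 (false, 0) (by simp)
  have hsplit : Rfun lam mu (false, 0) =
      rfun lam mu 0 (false, 0) + ∑' i, rfun lam mu (i + 1) (false, 0) :=
    Summable.tsum_eq_zero_add hsum
  calc Rfun lam mu (false, 0)
      = rfun lam mu 0 (false, 0) + ∑' i, rfun lam mu (i + 1) (false, 0) := hsplit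
    _ = (fInfo lam mu (false, 0) - Cap lam mu) * piPsi lam mu (false, 0) +
        (1 - lam) * ∑' i, aA lam mu i 0 := by
        rw [show rfun lam mu 0 (false, 0) =
            (fInfo lam mu (false, 0) - Cap lam mu) * piPsi lam mu (false, 0) from rfun_zero (e0 0),
          tsum_congr (fun i => rfun_succ_zero (lam := lam) (mu := mu) i), tsum_mul_left]
    _ = _ := by rw [tsum_aA h0 h1 h2 0]

lemma balPos (q : ℕ) (c : Bool) : Rfun lam mu (c, q + 1) =
    (fInfo lam mu (c, q + 1) - Cap lam mu) * piPsi lam mu (c, q + 1) +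
      (if c then mu else 1 - mu) *
        (lam * (Rfun lam mu (false, q) + Rfun lam mu (true, q + 1)) +
          (1 - lam) * (Rfun lam mu (false, q + 1) + Rfun lam mu (true, q + 2))) := by
  have hsum := summable_rfun h0 h1 h2 (c, q + 1) (fun _ => by omega)
  have hsplit : Rfun lam mu (c, q + 1) =
      rfun lam mu 0 (c, q + 1) + ∑' i, rfun lam mu (i + 1) (c, q + 1) :=
    Summable.tsum_eq_zero_add hsum
  calc Rfun lam mu (c, q + 1)
      = rfun lam mu 0 (c, q + 1) + ∑' i, rfun lam mu (i + 1) (c, q + 1) := hsplit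
    _ = (fInfo lam mu (c, q + 1) - Cap lam mu) * piPsi lam mu (c, q + 1) +
        (if c then mu else 1 - mu) *
          ∑' i, (lam * aA lam mu i q + (1 - lam) * aA lam mu i (q + 1)) := by
        rw [show rfun lam mu 0 (c, q + 1) =
            (fInfo lam mu (c, q + 1) - Cap lam mu) * piPsi lam mu (c, q + 1) from
            rfun_zero ⟨(c, q + 1), fun _ => by omega⟩,
          tsum_congr (fun i => rfun_succ_pos (lam := lam) (mu := mu) i q c), tsum_mul_left]
    _ = _ := by
        rw [Summable.tsum_add ((summable_aA' h0 h1 h2 q).mul_left lam)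
            ((summable_aA' h0 h1 h2 (q + 1)).mul_left (1 - lam)),
          tsum_mul_left, tsum_mul_left, tsum_aA h0 h1 h2 q, tsum_aA h0 h1 h2 (q + 1)]

lemma Id1 : ∀ q : ℕ,
    (1 - lam) * Rfun lam mu (true, q + 1) - lam * Rfun lam mu (false, q) = M0 lam mu q := by
  intro q
  induction q with
  | zero =>
    have hb := bal0 h0 h1 h2
    have hM := M0_zero' lam mu
    simp only [fInfo, piPsi] at hb hM
    linear_combination (-1 : ℝ) * hb - hM
  | succ q ih =>
    have bF := balPos h0 h1 h2 q false
    simp only [Bool.false_eq_true, if_false] at bF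
    have bT := balPos h0 h1 h2 q true
    simp only [if_true] at bT
    have hM := M0_succ' lam mu q
    linear_combination (-1 : ℝ) * bF - bT + ih - hM

set_option maxHeartbeats 3000000 in
lemma starScalar (t : ℝ) :
    lam * (1 - mu) * ((Cap lam mu - Real.log (1 / (1 - lam))) * piQ lam mu 0 * (1 - rho lam mu) +
        mw lam mu * rho lam mu * (1 - t)) +
      (1 - lam) * (1 - mu) *
        ((Cap lam mu - Real.log (1 / (1 - lam))) * piQ lam mu 0 * (1 - rho lam mu) +
          mw lam mu * rho lam mu * (1 - rho lam mu * t)) +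
      (1 - lam) * ((Real.log ((1 - mu) / (1 - lam)) - Cap lam mu) *
        ((1 - mu) * (((1 - lam) * mu - lam * (1 - mu)) / (mu * (1 - mu)) * (rho lam mu * t)))) *
        (1 - rho lam mu) =
      (1 - lam) * mu * cMt lam mu * (rho lam mu * t) * (1 - rho lam mu) := by
  have hl1 : lam < 1 := by linarith
  have hm0 : (0:ℝ) < mu := by linarith
  have hpiq0 : piQ lam mu 0 = ((1 - lam) * mu - lam * (1 - mu)) / mu := by simp [piQ]
  rw [hpiq0]
  unfold cMt cM0 mw
  rw [hpiq0]
  unfold Cap Hbin rho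
  rw [Real.log_div (by linarith : (1:ℝ) - mu ≠ 0) (by linarith : (1:ℝ) - lam ≠ 0),
    Real.log_div hm0.ne' h0.ne', one_div, Real.log_inv]
  have d1 : (1:ℝ) - lam ≠ 0 := by linarith
  have d2 : mu ≠ 0 := hm0.ne'
  have d3 : (1:ℝ) - mu ≠ 0 := by linarith
  have d4 : lam ≠ 0 := h0.ne'
  have d5 : (1 - lam) * mu ≠ 0 := mul_ne_zero d1 d2
  have d6 : mu * (1 - mu) ≠ 0 := mul_ne_zero d2 d3
  field_simp
  ring

lemma starEq (q : ℕ) :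
    lam * (1 - mu) * M0 lam mu q + (1 - lam) * (1 - mu) * M0 lam mu (q + 1) +
      (1 - lam) * ((fInfo lam mu (false, q + 1) - Cap lam mu) * piPsi lam mu (false, q + 1)) =
      (1 - lam) * mu * cMt lam mu * rho lam mu ^ (q + 1) := by
  have hρ1 := hrho1 h0 h1 h2
  have h1ρ : (0:ℝ) < 1 - rho lam mu := by linarith
  have c1 := M0_closed lam mu q
  have c2 := M0_closed lam mu (q + 1)
  have hpi : (fInfo lam mu (false, q + 1) - Cap lam mu) * piPsi lam mu (false, q + 1) =
      (Real.log ((1 - mu) / (1 - lam)) - Cap lam mu) *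
        ((1 - mu) * (((1 - lam) * mu - lam * (1 - mu)) / (mu * (1 - mu)) *
          (rho lam mu * rho lam mu ^ q))) := by
    simp only [fInfo, piPsi, piQ, Nat.succ_ne_zero, if_false]
    rw [pow_succ]
    ring
  have S := starScalar h0 h1 h2 (rho lam mu ^ q)
  apply mul_right_cancel₀ h1ρ.ne'
  linear_combination (lam * (1 - mu)) * c1 + ((1 - lam) * (1 - mu)) * c2 + S +
    ((1 - lam) * (1 - rho lam mu)) * hpi

lemma Id2 (q : ℕ) : Rfun lam mu (false, q + 1) =
    rho lam mu * Rfun lam mu (false, q) + cMt lam mu * rho lam mu ^ (q + 1) := by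
  have hl1 : lam < 1 := by linarith
  have hm0 : (0:ℝ) < mu := by linarith
  have bF := balPos h0 h1 h2 q false
  simp only [Bool.false_eq_true, if_false] at bF
  have i1 := Id1 h0 h1 h2 q
  have i2 := Id1 h0 h1 h2 (q + 1)
  have star := starEq h0 h1 h2 q
  have hρr : rho lam mu * ((1 - lam) * mu) = lam * (1 - mu) := by
    unfold rho
    exact div_mul_cancel₀ _ (mul_ne_zero (by linarith : (1:ℝ) - lam ≠ 0) hm0.ne')
  have key : (1 - lam) * mu * Rfun lam mu (false, q + 1) =
      (1 - lam) * ((fInfo lam mu (false, q + 1) - Cap lam mu) * piPsi lam mu (false, q + 1)) +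
        lam * (1 - mu) * Rfun lam mu (false, q) + lam * (1 - mu) * M0 lam mu q +
        (1 - lam) * (1 - mu) * M0 lam mu (q + 1) := by
    linear_combination (1 - lam) * bF + (lam * (1 - mu)) * i1 + ((1 - lam) * (1 - mu)) * i2
  have fin : (1 - lam) * mu * Rfun lam mu (false, q + 1) =
      (1 - lam) * mu * (rho lam mu * Rfun lam mu (false, q) + cMt lam mu * rho lam mu ^ (q + 1)) := by
    linear_combination key + star - Rfun lam mu (false, q) * hρr
  exact mul_left_cancel₀ (mul_ne_zero (by linarith : (1:ℝ) - lam ≠ 0) hm0.ne') fin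

end withH4

end BEAux
end BEAux
/-- for every `q ≥ 0`, `λ̄ R(1,q+1) - λ R(0,q) = M(q,0)` and
`R(0,q+1) = ρ R(0,q) + c_{M̃} ρ^{q+1}`. -/
theorem Rfun_recursions (lam mu : ℝ) (h0 : 0 < lam) (h1 : lam < mu) (h2 : mu < 1) :
    ∀ q : ℕ,
      (1 - lam) * Rfun lam mu (true, q + 1) - lam * Rfun lam mu (false, q) = M0 lam mu q ∧
      Rfun lam mu (false, q + 1) =
        rho lam mu * Rfun lam mu (false, q) + cMt lam mu * rho lam mu ^ (q + 1) := by
  intro q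
  exact ⟨BEAux.Id1 h0 h1 h2 q, BEAux.Id2 h0 h1 h2 q⟩
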